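/- Let H be a Hilbert space, and let [A_{ij}] ∈ M_n(B(H)). Suppose that for every pair of tuples (f_i)_{i=1}^n, (g_i)_{i=1}^n in H with ∑‖f_i‖² = ∑‖g_i‖² = 1, there exist contractions C, R (C: H → H ⊗ ℓ² a column of operators commuting appropriately, R similar) and unit vectors F, G ∈ H with f_i = C_i F and g_i = R_i G for all i. Then ‖[A_{ij}]‖_{B(H^n)} = sup { ‖∑_{i,j} R_i* A_{ij} C_j‖ }, where the supremum is over all such contractive columns C = (C_j) and R = (R_i). -/

import Mathlib

open scoped ComplexOrder

local notation "⟪" x ", " y "⟫" => @inner ℂ _ _ x y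

/-- Column contraction bound: the PiLp-2 vector `(Cᵢ x)` has norm at most `‖x‖`. -/
lemma stmt19_col {H : Type*} [NormedAddCommGroup H] [InnerProductSpace ℂ H]
    {n : ℕ} (C : Fin n → H →L[ℂ] H)
    (hC : ∀ x : H, ∑ i, ‖C i x‖ ^ 2 ≤ ‖x‖ ^ 2) (x : H) :
    ‖(WithLp.equiv 2 (∀ _ : Fin n, H)).symm (fun i => C i x)‖ ≤ ‖x‖ := by
  have h1 : ‖(WithLp.equiv 2 (∀ _ : Fin n, H)).symm (fun i => C i x)‖ ^ 2 ≤ ‖x‖ ^ 2 := by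
    rw [PiLp.norm_sq_eq_of_L2]
    simpa using hC x
  exact (pow_le_pow_iff_left₀ (norm_nonneg _) (norm_nonneg _) two_ne_zero).mp h1

/-- The key inner product computation. -/
lemma stmt19_key {H : Type*} [NormedAddCommGroup H] [InnerProductSpace ℂ H] [CompleteSpace H]
    {n : ℕ} (A : Fin n → Fin n → (H →L[ℂ] H))
    (TA : PiLp 2 (fun _ : Fin n => H) →L[ℂ] PiLp 2 (fun _ : Fin n => H))
    (hTA : ∀ (f : PiLp 2 (fun _ : Fin n => H)) (i : Fin n), TA f i = ∑ j, A i j (f j))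
    (C R : Fin n → H →L[ℂ] H) (x y : H) :
    ⟪TA ((WithLp.equiv 2 (∀ _ : Fin n, H)).symm fun j => C j x),
      (WithLp.equiv 2 (∀ _ : Fin n, H)).symm fun i => R i y⟫
    = ⟪(∑ i, ∑ j, star (R i) * A i j * C j) x, y⟫ := by
  rw [PiLp.inner_apply]
  rw [ContinuousLinearMap.sum_apply, sum_inner]
  refine Finset.sum_congr rfl fun i _ => ?_
  rw [hTA, ContinuousLinearMap.sum_apply, sum_inner, sum_inner]
  refine Finset.sum_congr rfl fun j _ => ?_
  simp only [WithLp.equiv_symm_apply, PiLp.toLp_apply, ContinuousLinearMap.mul_apply,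
    ContinuousLinearMap.star_eq_adjoint, ContinuousLinearMap.adjoint_inner_left]

/-- (Matricial norming.) Let `[A_{ij}] ∈ Mₙ(B(H))`, realized
as the operator `TA : Hⁿ → Hⁿ`. Suppose every pair of unit vectors
`(fᵢ), (gᵢ) ∈ Hⁿ` factors as `fᵢ = Cᵢ F`, `gᵢ = Rᵢ G` with contractive columns
`C, R` and vectors `F, G` of norm at most `1`. Then
`‖[A_{ij}]‖_{B(Hⁿ)} = sup ‖∑_{i,j} Rᵢ* A_{ij} Cⱼ‖`, the supremum being over all
contractive columns `C = (Cⱼ)`, `R = (Rᵢ)`. -/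
theorem stmt19 {H : Type*} [NormedAddCommGroup H] [InnerProductSpace ℂ H] [CompleteSpace H]
    (n : ℕ) (A : Fin n → Fin n → (H →L[ℂ] H))
    (TA : PiLp 2 (fun _ : Fin n => H) →L[ℂ] PiLp 2 (fun _ : Fin n => H))
    (hTA : ∀ (f : PiLp 2 (fun _ : Fin n => H)) (i : Fin n), TA f i = ∑ j, A i j (f j))
    (hfact : ∀ f g : Fin n → H, ∑ i, ‖f i‖ ^ 2 = 1 → ∑ i, ‖g i‖ ^ 2 = 1 →
      ∃ (C R : Fin n → H →L[ℂ] H) (F G : H),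
        (∀ x : H, ∑ i, ‖C i x‖ ^ 2 ≤ ‖x‖ ^ 2) ∧
        (∀ x : H, ∑ i, ‖R i x‖ ^ 2 ≤ ‖x‖ ^ 2) ∧
        ‖F‖ ≤ 1 ∧ ‖G‖ ≤ 1 ∧ (∀ i, f i = C i F) ∧ (∀ i, g i = R i G)) :
    ‖TA‖ = sSup { r : ℝ | ∃ C R : Fin n → H →L[ℂ] H,
      (∀ x : H, ∑ i, ‖C i x‖ ^ 2 ≤ ‖x‖ ^ 2) ∧
      (∀ x : H, ∑ i, ‖R i x‖ ^ 2 ≤ ‖x‖ ^ 2) ∧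
      r = ‖∑ i, ∑ j, star (R i) * A i j * C j‖ } := by
  set S := { r : ℝ | ∃ C R : Fin n → H →L[ℂ] H,
      (∀ x : H, ∑ i, ‖C i x‖ ^ 2 ≤ ‖x‖ ^ 2) ∧
      (∀ x : H, ∑ i, ‖R i x‖ ^ 2 ≤ ‖x‖ ^ 2) ∧
      r = ‖∑ i, ∑ j, star (R i) * A i j * C j‖ } with hSdef
  -- 0 ∈ S
  have h0 : (0 : ℝ) ∈ S := by
    refine ⟨0, 0, ?_, ?_, ?_⟩ <;> simp [sq_nonneg]
  -- every element of S is at most ‖TA‖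
  have hub : ∀ r ∈ S, r ≤ ‖TA‖ := by
    rintro r ⟨C, R, hC, hR, rfl⟩
    refine ContinuousLinearMap.opNorm_le_bound _ (norm_nonneg TA) fun x => ?_
    set Sop := ∑ i, ∑ j, star (R i) * A i j * C j with hSop
    have hinner : ∀ y : H, ‖⟪Sop x, y⟫‖ ≤ ‖TA‖ * ‖x‖ * ‖y‖ := by
      intro y
      rw [← stmt19_key A TA hTA C R x y]
      calc ‖⟪TA ((WithLp.equiv 2 (∀ _ : Fin n, H)).symm fun j => C j x),
              (WithLp.equiv 2 (∀ _ : Fin n, H)).symm fun i => R i y⟫‖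
          ≤ ‖TA ((WithLp.equiv 2 (∀ _ : Fin n, H)).symm fun j => C j x)‖ *
            ‖(WithLp.equiv 2 (∀ _ : Fin n, H)).symm fun i => R i y‖ :=
            norm_inner_le_norm _ _
        _ ≤ (‖TA‖ * ‖x‖) * ‖y‖ := by
            apply mul_le_mul
            · exact le_trans (TA.le_opNorm _)
                (by exact mul_le_mul_of_nonneg_left (stmt19_col C hC x) (norm_nonneg TA))
            · exact stmt19_col R hR y
            · exact norm_nonneg _
            · positivity
        _ = ‖TA‖ * ‖x‖ * ‖y‖ := by ring
    by_cases hz : Sop x = 0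
    · rw [hz, norm_zero]; positivity
    · have h1 := hinner (Sop x)
      rw [inner_self_eq_norm_sq_to_K] at h1
      simp only [norm_pow, RCLike.norm_ofReal, abs_norm] at h1
      have hpos : 0 < ‖Sop x‖ := norm_pos_iff.mpr hz
      nlinarith [norm_nonneg (Sop x)]
  have hbdd : BddAbove S := ⟨‖TA‖, hub⟩
  have hsup0 : 0 ≤ sSup S := le_csSup hbdd h0
  refine le_antisymm ?_ (Real.sSup_le hub (norm_nonneg TA))
  -- ‖TA‖ ≤ sSup S
  refine ContinuousLinearMap.opNorm_le_bound _ hsup0 fun f => ?_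
  by_cases hTf : TA f = 0
  · rw [hTf]; simp; positivity
  have hf : f ≠ 0 := fun h => hTf (by rw [h, map_zero])
  have hfpos : 0 < ‖f‖ := norm_pos_iff.mpr hf
  have hTfpos : 0 < ‖TA f‖ := norm_pos_iff.mpr hTf
  set a : ℂ := (‖f‖ : ℂ)⁻¹ with ha
  set b : ℂ := (‖TA f‖ : ℂ)⁻¹ with hb
  set f' : PiLp 2 (fun _ : Fin n => H) := a • f with hf'
  set g' : PiLp 2 (fun _ : Fin n => H) := b • TA f with hg'
  have hnf' : ‖f'‖ = 1 := by
    rw [hf', norm_smul, ha, norm_inv]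
    simp only [Complex.norm_real, norm_norm]
    field_simp
  have hng' : ‖g'‖ = 1 := by
    rw [hg', norm_smul, hb, norm_inv]
    simp only [Complex.norm_real, norm_norm]
    field_simp
  have hsumf : ∑ i, ‖f' i‖ ^ 2 = 1 := by
    rw [← PiLp.norm_sq_eq_of_L2, hnf', one_pow]
  have hsumg : ∑ i, ‖g' i‖ ^ 2 = 1 := by
    rw [← PiLp.norm_sq_eq_of_L2, hng', one_pow]
  obtain ⟨C, R, F, G, hC, hR, hF, hG, hCf, hRg⟩ := hfact (fun i => f' i) (fun i => g' i) hsumf hsumg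
  set Sop := ∑ i, ∑ j, star (R i) * A i j * C j with hSop
  have hmem : ‖Sop‖ ∈ S := ⟨C, R, hC, hR, rfl⟩
  have hSle : ‖Sop‖ ≤ sSup S := le_csSup hbdd hmem
  -- f' and g' as column vectors
  have hfeq : f' = (WithLp.equiv 2 (∀ _ : Fin n, H)).symm (fun j => C j F) := by
    ext i; simpa using hCf i
  have hgeq : g' = (WithLp.equiv 2 (∀ _ : Fin n, H)).symm (fun i => R i G) := by
    ext i; simpa using hRg i
  have hinner2 : ⟪TA f', g'⟫ = ⟪Sop F, G⟫ := by
    rw [hfeq, hgeq]; exact stmt19_key A TA hTA C R F G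
  have hval : ‖⟪TA f', g'⟫‖ = ‖f‖⁻¹ * ‖TA f‖ := by
    rw [hf', hg', map_smul, inner_smul_left, inner_smul_right,
      inner_self_eq_norm_sq_to_K]
    rw [norm_mul, norm_mul, norm_pow]
    rw [ha, hb]
    simp only [map_inv₀, Complex.conj_ofReal, norm_inv, Complex.norm_real, norm_norm,
      RCLike.norm_ofReal, abs_norm]
    field_simp
  have hbound : ‖f‖⁻¹ * ‖TA f‖ ≤ sSup S := by
    rw [← hval, hinner2]
    calc ‖⟪Sop F, G⟫‖ ≤ ‖Sop F‖ * ‖G‖ := norm_inner_le_norm _ _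
      _ ≤ ‖Sop‖ * ‖F‖ * ‖G‖ := by
          exact mul_le_mul_of_nonneg_right (Sop.le_opNorm F) (norm_nonneg G)
      _ ≤ ‖Sop‖ * 1 * 1 := by
          apply mul_le_mul
          · exact mul_le_mul_of_nonneg_left hF (norm_nonneg _)
          · exact hG
          · exact norm_nonneg _
          · positivity
      _ = ‖Sop‖ := by ring
      _ ≤ sSup S := hSle
  calc ‖TA f‖ = (‖f‖⁻¹ * ‖TA f‖) * ‖f‖ := by field_simp
    _ ≤ sSup S * ‖f‖ := mul_le_mul_of_nonneg_right hbound (norm_nonneg f)
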